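/- There exists a constant C > 0 such that for all t > 0: ∫₀ᵗ ds / (√(1+s)·√s·√(t−s)) ≤ C·log(2+t)/√(1+t). -/

import Mathlib

open MeasureTheory intervalIntegral Real Set

noncomputable def cf (t s : ℝ) : ℝ :=
  1 / (Real.sqrt (1 + s) * Real.sqrt s * Real.sqrt (t - s))

lemma cf_nonneg (t s : ℝ) : 0 ≤ cf t s := by
  unfold cf; positivity

lemma cf_meas (t : ℝ) : Measurable (cf t) := by
  unfold cf
  exact measurable_const.div
    (((Real.continuous_sqrt.comp (continuous_const.add continuous_id)).mul
      Real.continuous_sqrt).mul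
      (Real.continuous_sqrt.comp (continuous_const.sub continuous_id))).measurable

lemma sqrt_two_sq : Real.sqrt 2 * Real.sqrt 2 = 2 := Real.mul_self_sqrt (by norm_num)

lemma pb1 (t : ℝ) (ht : 0 < t) {s : ℝ} (hs : s ∈ Set.Icc 0 (t / 2)) :
    cf t s ≤ (Real.sqrt 2 / Real.sqrt t) * s ^ (-(1/2) : ℝ) := by
  rcases eq_or_lt_of_le hs.1 with rfl | hs0
  · simp [cf]
  · have hst : s ≤ t / 2 := hs.2
    have hts : 0 < t - s := by linarith
    have h1s : 1 ≤ Real.sqrt (1 + s) := by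
      have := Real.sqrt_le_sqrt (show (1:ℝ) ≤ 1 + s by linarith)
      simpa using this
    have hkey : Real.sqrt t ≤ Real.sqrt 2 * Real.sqrt (t - s) := by
      rw [← Real.sqrt_mul (by norm_num : (0:ℝ) ≤ 2)]
      exact Real.sqrt_le_sqrt (by linarith)
    have hrp : s ^ (-(1/2) : ℝ) = (Real.sqrt s)⁻¹ := by
      rw [Real.rpow_neg hs0.le, ← Real.sqrt_eq_rpow]
    unfold cf
    rw [hrp, show (Real.sqrt 2 / Real.sqrt t) * (Real.sqrt s)⁻¹
        = Real.sqrt 2 / (Real.sqrt t * Real.sqrt s) by ring]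
    rw [div_le_div_iff₀ (by positivity) (by positivity)]
    nlinarith [mul_le_mul_of_nonneg_right hkey (Real.sqrt_nonneg s),
      mul_nonneg (mul_nonneg (Real.sqrt_nonneg 2) (Real.sqrt_nonneg (t - s)))
        (Real.sqrt_nonneg s), h1s]

lemma pb2 (t : ℝ) (ht : 0 < t) {s : ℝ} (hs : s ∈ Set.Icc 1 (t / 2)) :
    cf t s ≤ (Real.sqrt 2 / Real.sqrt t) * (1 / s) := by
  have hs1 : 1 ≤ s := hs.1
  have hs0 : 0 < s := by linarith
  have hts : 0 < t - s := by
    have := hs.2; linarith [hs.2]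
  have hss : Real.sqrt s * Real.sqrt s = s := Real.mul_self_sqrt hs0.le
  have hup : Real.sqrt s ≤ Real.sqrt (1 + s) := Real.sqrt_le_sqrt (by linarith)
  have hkey : Real.sqrt t ≤ Real.sqrt 2 * Real.sqrt (t - s) := by
    rw [← Real.sqrt_mul (by norm_num : (0:ℝ) ≤ 2)]
    exact Real.sqrt_le_sqrt (by linarith [hs.2])
  unfold cf
  rw [show (Real.sqrt 2 / Real.sqrt t) * (1 / s) = Real.sqrt 2 / (Real.sqrt t * s) by ring]
  rw [div_le_div_iff₀ (by positivity) (by positivity)]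
  have e1 : Real.sqrt t * s ≤ Real.sqrt 2 * Real.sqrt (t - s) * s :=
    mul_le_mul_of_nonneg_right hkey hs0.le
  have e2 : s ≤ Real.sqrt (1 + s) * Real.sqrt s := by
    nlinarith [mul_le_mul_of_nonneg_right hup (Real.sqrt_nonneg s)]
  have e3 : Real.sqrt 2 * Real.sqrt (t - s) * s
      ≤ Real.sqrt 2 * Real.sqrt (t - s) * (Real.sqrt (1 + s) * Real.sqrt s) :=
    mul_le_mul_of_nonneg_left e2
      (mul_nonneg (Real.sqrt_nonneg 2) (Real.sqrt_nonneg (t - s)))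
  nlinarith [e1, e3]

lemma pb3 (t : ℝ) (ht : 0 < t) {s : ℝ} (hs : s ∈ Set.Icc (t / 2) t) :
    cf t s ≤ (Real.sqrt (1 + t / 2) * Real.sqrt (t / 2))⁻¹ * (t - s) ^ (-(1/2) : ℝ) := by
  rcases eq_or_lt_of_le hs.2 with rfl | hlt
  · simp [cf, Real.zero_rpow]
  · have hts : 0 < t - s := by linarith
    have hs0 : 0 < s := by linarith [hs.1]
    have hrp : (t - s) ^ (-(1/2) : ℝ) = (Real.sqrt (t - s))⁻¹ := by
      rw [Real.rpow_neg hts.le, ← Real.sqrt_eq_rpow]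
    rw [hrp, show (Real.sqrt (1 + t / 2) * Real.sqrt (t / 2))⁻¹ * (Real.sqrt (t - s))⁻¹
        = 1 / (Real.sqrt (1 + t / 2) * Real.sqrt (t / 2) * Real.sqrt (t - s)) by ring]
    unfold cf
    apply one_div_le_one_div_of_le (by positivity)
    have h1 : Real.sqrt (1 + t / 2) ≤ Real.sqrt (1 + s) := Real.sqrt_le_sqrt (by linarith [hs.1])
    have h2 : Real.sqrt (t / 2) ≤ Real.sqrt s := Real.sqrt_le_sqrt hs.1
    exact mul_le_mul_of_nonneg_right
      (mul_le_mul h1 h2 (Real.sqrt_nonneg _) (by positivity)) (Real.sqrt_nonneg _)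

lemma cf_intInt_left (t : ℝ) (ht : 0 < t) {a b : ℝ} (ha : 0 ≤ a) (hab : a ≤ b) (hb : b ≤ t / 2) :
    IntervalIntegrable (cf t) volume a b := by
  apply IntervalIntegrable.mono_fun'
    (g := fun s => (Real.sqrt 2 / Real.sqrt t) * s ^ (-(1/2) : ℝ))
  · exact (intervalIntegrable_rpow' (by norm_num)).const_mul _
  · exact ((cf_meas t).aestronglyMeasurable).restrict
  · rw [Filter.EventuallyLE, ae_restrict_iff' measurableSet_uIoc]
    filter_upwards with s hsm
    rw [Set.uIoc_of_le hab] at hsm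
    rw [Real.norm_eq_abs, abs_of_nonneg (cf_nonneg t s)]
    exact pb1 t ht ⟨le_trans ha hsm.1.le, hsm.2.trans hb⟩
  

lemma rpow_sub_int (t : ℝ) :
    IntervalIntegrable (fun s : ℝ => (t - s) ^ (-(1/2) : ℝ)) volume (t / 2) t := by
  have h := (intervalIntegrable_rpow' (a := 0) (b := t / 2) (r := -(1/2))
    (by norm_num)).comp_sub_left t
  have h' := h.symm
  simpa [sub_zero, show t - t / 2 = t / 2 by ring] using h'

lemma cf_intInt_right (t : ℝ) (ht : 0 < t) :
    IntervalIntegrable (cf t) volume (t / 2) t := by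
  apply IntervalIntegrable.mono_fun'
    (g := fun s => (Real.sqrt (1 + t / 2) * Real.sqrt (t / 2))⁻¹ * (t - s) ^ (-(1/2) : ℝ))
  · exact (rpow_sub_int t).const_mul _
  · exact ((cf_meas t).aestronglyMeasurable).restrict
  · rw [Filter.EventuallyLE, ae_restrict_iff' measurableSet_uIoc]
    filter_upwards with s hsm
    rw [Set.uIoc_of_le (by linarith : t / 2 ≤ t)] at hsm
    rw [Real.norm_eq_abs, abs_of_nonneg (cf_nonneg t s)]
    exact pb3 t ht ⟨hsm.1.le, hsm.2⟩

lemma int_rpow_half (a : ℝ) (ha : 0 ≤ a) :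
    ∫ x in (0:ℝ)..a, x ^ (-(1/2) : ℝ) = 2 * Real.sqrt a := by
  rw [integral_rpow (Or.inl (by norm_num))]
  rw [show (-(1/2) + 1 : ℝ) = 1/2 by norm_num]
  rw [Real.zero_rpow (by norm_num), Real.sqrt_eq_rpow]
  ring

lemma int_right_val (t : ℝ) (ht : 0 < t) :
    (∫ s in (t/2)..t, (Real.sqrt (1 + t / 2) * Real.sqrt (t / 2))⁻¹ * (t - s) ^ (-(1/2) : ℝ))
      = 2 / Real.sqrt (1 + t / 2) := by
  rw [intervalIntegral.integral_const_mul]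
  have h : (∫ s in (t/2)..t, (t - s) ^ (-(1/2) : ℝ))
      = ∫ x in (t - t)..(t - t/2), x ^ (-(1/2) : ℝ) :=
    integral_comp_sub_left (fun u => u ^ (-(1/2) : ℝ)) t
  rw [show t - t = (0:ℝ) by ring, show t - t/2 = t/2 by ring] at h
  rw [h, int_rpow_half _ (by linarith)]
  have hA : Real.sqrt (1 + t/2) ≠ 0 := ne_of_gt (Real.sqrt_pos.mpr (by linarith))
  have hB : Real.sqrt (t/2) ≠ 0 := ne_of_gt (Real.sqrt_pos.mpr (by linarith))
  field_simp

set_option maxHeartbeats 1000000 in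
lemma cf_main (t : ℝ) (ht : 0 < t) :
    (∫ s in (0:ℝ)..t, cf t s) ≤ 16 * Real.log (2 + t) / Real.sqrt (1 + t) := by
  have hlog2 : (0.6931471803 : ℝ) < Real.log 2 := Real.log_two_gt_d9
  have hlogm : Real.log 2 ≤ Real.log (2 + t) := Real.log_le_log (by norm_num) (by linarith)
  have hs1t : (0:ℝ) < Real.sqrt (1 + t) := Real.sqrt_pos.mpr (by linarith)
  have hsqt : (0:ℝ) < Real.sqrt t := Real.sqrt_pos.mpr ht
  have hsq2 : (0:ℝ) < Real.sqrt (1 + t/2) := Real.sqrt_pos.mpr (by linarith)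
  have hI1 : IntervalIntegrable (cf t) volume 0 (t/2) :=
    cf_intInt_left t ht le_rfl (by linarith) le_rfl
  have hI2 : IntervalIntegrable (cf t) volume (t/2) t := cf_intInt_right t ht
  have hsplit : (∫ s in (0:ℝ)..t, cf t s)
      = (∫ s in (0:ℝ)..(t/2), cf t s) + ∫ s in (t/2)..t, cf t s :=
    (integral_add_adjacent_intervals hI1 hI2).symm
  have hP2 : (∫ s in (t/2)..t, cf t s) ≤ 2 / Real.sqrt (1 + t/2) := by
    calc (∫ s in (t/2)..t, cf t s)
        ≤ ∫ s in (t/2)..t, (Real.sqrt (1 + t/2) * Real.sqrt (t/2))⁻¹ * (t - s) ^ (-(1/2) : ℝ) :=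
          integral_mono_on (by linarith) hI2 ((rpow_sub_int t).const_mul _)
            (fun s hs => pb3 t ht hs)
      _ = 2 / Real.sqrt (1 + t/2) := int_right_val t ht
  rcases le_or_gt t 2 with hcase | hcase
  · -- small t
    have hP1 : (∫ s in (0:ℝ)..(t/2), cf t s) ≤ 2 := by
      have hmaj : IntervalIntegrable (fun s : ℝ => (Real.sqrt 2 / Real.sqrt t) * s ^ (-(1/2):ℝ))
          volume 0 (t/2) := (intervalIntegrable_rpow' (by norm_num)).const_mul _
      calc (∫ s in (0:ℝ)..(t/2), cf t s)
          ≤ ∫ s in (0:ℝ)..(t/2), (Real.sqrt 2 / Real.sqrt t) * s ^ (-(1/2):ℝ) :=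
            integral_mono_on (by linarith) hI1 hmaj (fun s hs => pb1 t ht hs)
        _ = (Real.sqrt 2 / Real.sqrt t) * (2 * Real.sqrt (t/2)) := by
            rw [intervalIntegral.integral_const_mul, int_rpow_half _ (by linarith)]
        _ = 2 := by
            rw [show Real.sqrt 2 / Real.sqrt t * (2 * Real.sqrt (t/2))
                = 2 * (Real.sqrt 2 * Real.sqrt (t/2)) / Real.sqrt t by ring,
              ← Real.sqrt_mul (by norm_num : (0:ℝ) ≤ 2), show (2 * (t/2) : ℝ) = t by ring,
              mul_div_assoc, div_self (ne_of_gt hsqt), mul_one]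
    have hge1 : (1:ℝ) ≤ Real.sqrt (1 + t/2) := by
      have := Real.sqrt_le_sqrt (show (1:ℝ) ≤ 1 + t/2 by linarith)
      simpa using this
    have h4 : 2 / Real.sqrt (1 + t/2) ≤ 2 := by
      rw [div_le_iff₀ hsq2]; nlinarith [hge1]
    have hsle : Real.sqrt (1 + t) ≤ 2 := by
      have h := Real.sqrt_le_sqrt (show (1 + t : ℝ) ≤ 4 by linarith)
      rwa [show (4:ℝ) = 2 ^ 2 by norm_num, Real.sqrt_sq (by norm_num : (0:ℝ) ≤ 2)] at h
    rw [hsplit]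
    have hsum : (∫ s in (0:ℝ)..(t/2), cf t s) + (∫ s in (t/2)..t, cf t s) ≤ 4 := by linarith
    refine hsum.trans ?_
    rw [le_div_iff₀ hs1t]
    nlinarith [hlogm, hlog2, hsle, hs1t]
  · -- large t
    have ht2 : (2:ℝ) ≤ t := hcase.le
    have hI1a : IntervalIntegrable (cf t) volume 0 1 :=
      cf_intInt_left t ht le_rfl (by norm_num) (by linarith)
    have hI1b : IntervalIntegrable (cf t) volume 1 (t/2) :=
      cf_intInt_left t ht (by norm_num) (by linarith) le_rfl
    have hsplit1 : (∫ s in (0:ℝ)..(t/2), cf t s)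
        = (∫ s in (0:ℝ)..1, cf t s) + ∫ s in (1:ℝ)..(t/2), cf t s :=
      (integral_add_adjacent_intervals hI1a hI1b).symm
    -- key sqrt facts
    have h22 : Real.sqrt 2 * Real.sqrt 2 * Real.sqrt t = 2 * Real.sqrt t := by rw [sqrt_two_sq]
    have hst2 : Real.sqrt (1 + t) ≤ Real.sqrt 2 * Real.sqrt t := by
      rw [← Real.sqrt_mul (by norm_num : (0:ℝ) ≤ 2)]
      exact Real.sqrt_le_sqrt (by linarith)
    have hst3 : Real.sqrt (1 + t) ≤ Real.sqrt 2 * Real.sqrt (1 + t/2) := by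
      rw [← Real.sqrt_mul (by norm_num : (0:ℝ) ≤ 2)]
      exact Real.sqrt_le_sqrt (by linarith)
    have key : Real.sqrt 2 * Real.sqrt (1 + t) ≤ 2 * Real.sqrt t := by
      nlinarith [mul_le_mul_of_nonneg_left hst2 (Real.sqrt_nonneg 2), h22]
    have hlt2 : Real.log (t/2) ≤ Real.log (2 + t) := Real.log_le_log (by linarith) (by linarith)
    have hl0 : (0:ℝ) ≤ Real.log (t/2) := Real.log_nonneg (by linarith)
    have hL1 : (1:ℝ) ≤ Real.log (2 + t) := by
      rw [Real.le_log_iff_exp_le (by linarith)]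
      have := Real.exp_one_lt_d9
      linarith
    have hsqrt2le : Real.sqrt 2 ≤ 1.5 := by
      nlinarith [sqrt_two_sq, Real.sqrt_nonneg 2]
    -- piece 1a
    have hP1a : (∫ s in (0:ℝ)..1, cf t s) ≤ 2 * Real.sqrt 2 / Real.sqrt t := by
      have hmaj : IntervalIntegrable (fun s : ℝ => (Real.sqrt 2 / Real.sqrt t) * s ^ (-(1/2):ℝ))
          volume 0 1 := (intervalIntegrable_rpow' (by norm_num)).const_mul _
      calc (∫ s in (0:ℝ)..1, cf t s)
          ≤ ∫ s in (0:ℝ)..1, (Real.sqrt 2 / Real.sqrt t) * s ^ (-(1/2):ℝ) :=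
            integral_mono_on (by norm_num) hI1a hmaj
              (fun s hs => pb1 t ht ⟨hs.1, hs.2.trans (by linarith)⟩)
        _ = (Real.sqrt 2 / Real.sqrt t) * (2 * Real.sqrt 1) := by
            rw [intervalIntegral.integral_const_mul, int_rpow_half _ (by norm_num)]
        _ = 2 * Real.sqrt 2 / Real.sqrt t := by rw [Real.sqrt_one]; ring
    -- piece 1b
    have hP1b : (∫ s in (1:ℝ)..(t/2), cf t s)
        ≤ Real.sqrt 2 * Real.log (t/2) / Real.sqrt t := by
      have hcont : ContinuousOn (fun s : ℝ => (Real.sqrt 2 / Real.sqrt t) * (1/s))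
          (Set.uIcc 1 (t/2)) := by
        apply ContinuousOn.mul continuousOn_const
        apply ContinuousOn.div continuousOn_const continuousOn_id
        intro x hx
        rw [Set.uIcc_of_le (by linarith : (1:ℝ) ≤ t/2)] at hx
        have : (1:ℝ) ≤ x := hx.1
        intro h
        rw [id_eq] at h
        rw [h] at this
        norm_num at this
      have hmaj : IntervalIntegrable (fun s : ℝ => (Real.sqrt 2 / Real.sqrt t) * (1/s))
          volume 1 (t/2) := hcont.intervalIntegrable
      calc (∫ s in (1:ℝ)..(t/2), cf t s)
          ≤ ∫ s in (1:ℝ)..(t/2), (Real.sqrt 2 / Real.sqrt t) * (1/s) :=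
            integral_mono_on (by linarith) hI1b hmaj (fun s hs => pb2 t ht hs)
        _ = (Real.sqrt 2 / Real.sqrt t) * Real.log ((t/2)/1) := by
            have h0 : (0:ℝ) ∉ Set.uIcc 1 (t/2) := by
              rw [Set.uIcc_of_le (by linarith : (1:ℝ) ≤ t/2)]
              intro h
              have := h.1; linarith
            rw [intervalIntegral.integral_const_mul, integral_one_div h0]
        _ = Real.sqrt 2 * Real.log (t/2) / Real.sqrt t := by rw [div_one]; ring
    -- comparison of each piece with c / sqrt (1+t)
    have e1 : 2 * Real.sqrt 2 / Real.sqrt t ≤ 4 / Real.sqrt (1 + t) := by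
      rw [div_le_div_iff₀ hsqt hs1t]
      linarith [key]
    have e2 : Real.sqrt 2 * Real.log (t/2) / Real.sqrt t
        ≤ 2 * Real.log (2 + t) / Real.sqrt (1 + t) := by
      rw [div_le_div_iff₀ hsqt hs1t]
      have a1 : Real.log (t/2) * (Real.sqrt 2 * Real.sqrt (1 + t))
          ≤ Real.log (t/2) * (2 * Real.sqrt t) := mul_le_mul_of_nonneg_left key hl0
      have a2 : Real.log (t/2) * (2 * Real.sqrt t)
          ≤ Real.log (2 + t) * (2 * Real.sqrt t) :=
        mul_le_mul_of_nonneg_right hlt2 (by positivity)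
      nlinarith [a1, a2]
    have e3 : 2 / Real.sqrt (1 + t/2) ≤ 3 / Real.sqrt (1 + t) := by
      rw [div_le_div_iff₀ hsq2 hs1t]
      have a3 : Real.sqrt 2 * Real.sqrt (1 + t/2) ≤ 1.5 * Real.sqrt (1 + t/2) :=
        mul_le_mul_of_nonneg_right hsqrt2le hsq2.le
      nlinarith [hst3, a3]
    rw [hsplit, hsplit1]
    have hfinal : 4 / Real.sqrt (1 + t) + 2 * Real.log (2 + t) / Real.sqrt (1 + t)
        + 3 / Real.sqrt (1 + t) ≤ 16 * Real.log (2 + t) / Real.sqrt (1 + t) := by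
      rw [← add_div, ← add_div]
      exact div_le_div_of_nonneg_right (by linarith [hL1]) hs1t.le
    calc (∫ s in (0:ℝ)..1, cf t s) + (∫ s in (1:ℝ)..(t/2), cf t s)
          + ∫ s in (t/2)..t, cf t s
        ≤ 4 / Real.sqrt (1 + t) + 2 * Real.log (2 + t) / Real.sqrt (1 + t)
          + 3 / Real.sqrt (1 + t) := by
          have := (hP1a.trans e1)
          have := (hP1b.trans e2)
          have := (hP2.trans e3)
          linarith
      _ ≤ 16 * Real.log (2 + t) / Real.sqrt (1 + t) := hfinal

theorem convolution_time_estimate_log :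
    ∃ C > (0 : ℝ), ∀ t : ℝ, 0 < t →
      (∫ s in (0:ℝ)..t, 1 / (Real.sqrt (1 + s) * Real.sqrt s * Real.sqrt (t - s))) ≤
        C * Real.log (2 + t) / Real.sqrt (1 + t) := by
  refine ⟨16, by norm_num, fun t ht => ?_⟩
  have h := cf_main t ht
  simpa [cf] using h
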